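/- Let D be an integer with 3 ≤ D ≤ 5, let L ≥ 1 be an integer, let x > 0 be real, and set T(w) = (1 − √(1 − 4w))/(2w). For real N > 0 large enough that 0 < 1/(4D) − x·N^{−(D−2)}, set z_N = 1/(4D) − x·N^{−(D−2)} and A_L(N) = N^{−(D−2)L} · catalan(L−1) · z_N^{5L−2} · D^{3L−1} · (D−1)^{2L−1} · T(D·z_N)^{8L−2} / ((1 − z_N·T(D·z_N)²)^{3L−1} · (1 − 4D·z_N)^{L−1/2}). Then there exist constants C > 0 and N₀ such that for all N ≥ N₀, |N^{D/2−1}·A_L(N) − 8·√D·catalan(L−1)·x^{1/2−L}/(16(D−1))^L| ≤ C·N^{−1/2}. -/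

import Mathlib

/-- Closed form of the plane-tree generating function. -/
noncomputable def Tgf (w : ℝ) : ℝ := (1 - Real.sqrt (1 - 4 * w)) / (2 * w)

/-- The rescaled coupling `z_N = 1/(4D) - x·N^{-(D-2)}`. -/
noncomputable def zN (D : ℕ) (x N : ℝ) : ℝ := 1 / (4 * (D : ℝ)) - x * N ^ (-((D : ℝ) - 2))

/-- The total amplitude of the `L`-loop cherry trees at the rescaled coupling `z_N`. -/
noncomputable def cherryAmp (D L : ℕ) (x N : ℝ) : ℝ :=
  N ^ (-((D : ℝ) - 2) * (L : ℝ)) * (catalan (L - 1) : ℝ) *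
    (zN D x N) ^ (5 * L - 2) * (D : ℝ) ^ (3 * L - 1) * ((D : ℝ) - 1) ^ (2 * L - 1) *
    (Tgf ((D : ℝ) * zN D x N)) ^ (8 * L - 2) /
    ((1 - zN D x N * (Tgf ((D : ℝ) * zN D x N)) ^ 2) ^ (3 * L - 1) *
      (1 - 4 * (D : ℝ) * zN D x N) ^ ((L : ℝ) - 1 / 2))

open Filter Real

/-- The model function: `hf D L s` is the rescaled amplitude expressed through `s = √(x·N^{2-D})`. -/
noncomputable def zf (D : ℕ) (s : ℝ) : ℝ := 1 / (4 * (D : ℝ)) - s ^ 2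

noncomputable def Tf (D : ℕ) (s : ℝ) : ℝ :=
  (1 - 2 * Real.sqrt D * s) / (2 * (D : ℝ) * zf D s)

noncomputable def hf (D L : ℕ) (s : ℝ) : ℝ :=
  zf D s ^ (5 * L - 2) * (D : ℝ) ^ (3 * L - 1) * ((D : ℝ) - 1) ^ (2 * L - 1) *
    Tf D s ^ (8 * L - 2) / (1 - zf D s * Tf D s ^ 2) ^ (3 * L - 1)

lemma zf0 {D : ℕ} : zf D 0 = 1 / (4 * (D:ℝ)) := by simp [zf]

lemma Tf0 {D : ℕ} (hD : 3 ≤ D) : Tf D 0 = 2 := by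
  have hD0 : (D:ℝ) ≠ 0 := by
    have : (0:ℝ) < (D:ℝ) := by exact_mod_cast (by omega : 0 < D)
    linarith
  simp [Tf, zf]
  field_simp
  ring

lemma key0 {D : ℕ} (hD : 3 ≤ D) : 1 - zf D 0 * Tf D 0 ^ 2 = ((D:ℝ) - 1) / D := by
  have hD0 : (D:ℝ) ≠ 0 := by
    have : (0:ℝ) < (D:ℝ) := by exact_mod_cast (by omega : 0 < D)
    linarith
  rw [Tf0 hD, zf0]
  field_simp
  ring

lemma hf_diff {D : ℕ} (hD : 3 ≤ D) (L : ℕ) : DifferentiableAt ℝ (hf D L) 0 := by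
  have hD0 : (D:ℝ) ≠ 0 := by
    have : (0:ℝ) < (D:ℝ) := by exact_mod_cast (by omega : 0 < D)
    linarith
  have hDR : (3:ℝ) ≤ (D:ℝ) := by exact_mod_cast hD
  have hzf : DifferentiableAt ℝ (zf D) 0 := by
    unfold zf; fun_prop
  have hden : DifferentiableAt ℝ (fun s => 2 * (D:ℝ) * zf D s) 0 := by fun_prop
  have hdenne : 2 * (D:ℝ) * zf D 0 ≠ 0 := by
    rw [zf0]; field_simp; norm_num
  have hTf : DifferentiableAt ℝ (Tf D) 0 := by
    unfold Tf
    exact (DifferentiableAt.div (by fun_prop) hden hdenne)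
  have hkeyne : (1 - zf D 0 * Tf D 0 ^ 2) ^ (3 * L - 1) ≠ 0 := by
    rw [key0 hD]
    apply pow_ne_zero
    have : (1:ℝ) ≤ (D:ℝ) - 1 := by linarith
    positivity
  unfold hf
  exact DifferentiableAt.div (by fun_prop) (by fun_prop) hkeyne

lemma aux_alg (n1 n2 n3 c p1 p2 p3 p4 k q : ℝ) (h : n1 * n2 * n3⁻¹ = 1) :
    n1 * (n2 * c * p1 * p2 * p3 * p4 / (k * (q * n3))) = c * q⁻¹ * (p1 * p2 * p3 * p4 / k) := by
  have h2 : n1 * (n2 * c * p1 * p2 * p3 * p4 / (k * (q * n3)))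
      = (n1 * n2 * n3⁻¹) * (c * q⁻¹ * (p1 * p2 * p3 * p4 / k)) := by ring
  rw [h2, h, one_mul]

lemma amp_eq {D L : ℕ} (hD : 3 ≤ D) {x N : ℝ} (hx : 0 < x) (hN : 0 < N) :
    N ^ ((D:ℝ)/2 - 1) * cherryAmp D L x N
      = (catalan (L-1) : ℝ) * (4 * (D:ℝ) * x) ^ ((1:ℝ)/2 - (L:ℝ)) *
        hf D L (Real.sqrt x * N ^ (-((D:ℝ) - 2)/2)) := by
  have hD0 : (0:ℝ) < (D:ℝ) := by exact_mod_cast (by omega : 0 < D)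
  have hDne : (D:ℝ) ≠ 0 := ne_of_gt hD0
  have h1 : (N ^ (-((D:ℝ) - 2)/2)) ^ (2:ℕ) = N ^ (-((D:ℝ) - 2)) := by
    rw [← Real.rpow_natCast (N ^ (-((D:ℝ) - 2)/2)) 2, ← Real.rpow_mul hN.le]
    norm_num
  have hs2 : (Real.sqrt x * N ^ (-((D:ℝ) - 2)/2)) ^ 2 = x * N ^ (-((D:ℝ) - 2)) := by
    rw [mul_pow, h1, Real.sq_sqrt hx.le]
  have hzz : zN D x N = zf D (Real.sqrt x * N ^ (-((D:ℝ) - 2)/2)) := by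
    rw [zf, hs2, zN]
  have hsnn : 0 ≤ Real.sqrt x * N ^ (-((D:ℝ) - 2)/2) :=
    mul_nonneg (Real.sqrt_nonneg _) (Real.rpow_pos_of_pos hN _).le
  have hB : 1 - 4 * (D:ℝ) * zN D x N = 4 * (D:ℝ) * (x * N ^ (-((D:ℝ) - 2))) := by
    rw [zN]; field_simp; ring
  have h4 : 1 - 4 * ((D:ℝ) * zN D x N)
      = (2 * Real.sqrt D * (Real.sqrt x * N ^ (-((D:ℝ) - 2)/2))) ^ 2 := by
    have h5 : (2 * Real.sqrt D * (Real.sqrt x * N ^ (-((D:ℝ) - 2)/2))) ^ 2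
        = 4 * (D:ℝ) * (x * N ^ (-((D:ℝ) - 2))) := by
      rw [mul_pow, mul_pow, Real.sq_sqrt hD0.le, hs2]; ring
    rw [h5, ← hB]; ring
  have hT : Tgf ((D:ℝ) * zN D x N) = Tf D (Real.sqrt x * N ^ (-((D:ℝ) - 2)/2)) := by
    rw [Tgf, Tf, h4, Real.sqrt_sq (by positivity), hzz]; ring_nf
  have hpow : (1 - 4 * (D:ℝ) * zN D x N) ^ ((L:ℝ) - 1/2)
      = (4 * (D:ℝ) * x) ^ ((L:ℝ) - 1/2) * N ^ (-((D:ℝ) - 2) * ((L:ℝ) - 1/2)) := by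
    rw [hB, show 4 * (D:ℝ) * (x * N ^ (-((D:ℝ) - 2))) = (4 * (D:ℝ) * x) * N ^ (-((D:ℝ) - 2)) by ring,
      Real.mul_rpow (by positivity) (Real.rpow_pos_of_pos hN _).le,
      ← Real.rpow_mul hN.le]
  have hNN : N ^ ((D:ℝ)/2 - 1) * N ^ (-((D:ℝ) - 2) * (L:ℝ)) *
      (N ^ (-((D:ℝ) - 2) * ((L:ℝ) - 1/2)))⁻¹ = 1 := by
    rw [← Real.rpow_neg hN.le, ← Real.rpow_add hN, ← Real.rpow_add hN,
      show (D:ℝ)/2 - 1 + -((D:ℝ) - 2) * (L:ℝ) + -(-((D:ℝ) - 2) * ((L:ℝ) - 1/2)) = 0 by ring,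
      Real.rpow_zero]
  have hinv : (4 * (D:ℝ) * x) ^ ((1:ℝ)/2 - (L:ℝ)) = ((4 * (D:ℝ) * x) ^ ((L:ℝ) - 1/2))⁻¹ := by
    rw [← Real.rpow_neg (by positivity)]
    congr 1; ring
  rw [cherryAmp, hT, hpow, hzz, hf, hinv]
  exact aux_alg _ _ _ _ _ _ _ _ _ _ hNN

lemma rpow_half_sub {L : ℕ} {y : ℝ} (hy : 0 < y) :
    y ^ ((1:ℝ)/2 - (L:ℝ)) = Real.sqrt y / y ^ L := by
  rw [show (1:ℝ)/2 - (L:ℝ) = 1/2 + (-(L:ℝ)) by ring, Real.rpow_add hy,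
    Real.rpow_neg hy.le, Real.rpow_natCast, ← Real.rpow_natCast y L]
  rw [← Real.sqrt_eq_rpow, div_eq_mul_inv]

lemma const_id {D L : ℕ} (hD : 3 ≤ D) (hL : 1 ≤ L) {x : ℝ} (hx : 0 < x) :
    (catalan (L-1) : ℝ) * (4 * (D:ℝ) * x) ^ ((1:ℝ)/2 - (L:ℝ)) * hf D L 0
      = 8 * Real.sqrt (D:ℝ) * (catalan (L-1) : ℝ) * x ^ ((1:ℝ)/2 - (L:ℝ)) /
          (16 * ((D:ℝ) - 1)) ^ L := by
  have hD0 : (0:ℝ) < (D:ℝ) := by exact_mod_cast (by omega : 0 < D)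
  have hD1 : (0:ℝ) < (D:ℝ) - 1 := by
    have : (3:ℝ) ≤ (D:ℝ) := by exact_mod_cast hD
    linarith
  obtain ⟨l, rfl⟩ : ∃ l, L = l + 1 := ⟨L - 1, by omega⟩
  rw [hf, key0 hD, Tf0 hD, zf0]
  rw [rpow_half_sub (by positivity), rpow_half_sub hx]
  rw [show 4 * (D:ℝ) * x = (2:ℝ)^2 * ((D:ℝ) * x) by ring, Real.sqrt_mul (by positivity),
    Real.sqrt_sq (by norm_num : (0:ℝ) ≤ 2), Real.sqrt_mul hD0.le]
  rw [show 5 * (l+1) - 2 = 5*l+3 by omega, show 3 * (l+1) - 1 = 3*l+2 by omega,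
    show 2 * (l+1) - 1 = 2*l+1 by omega, show 8 * (l+1) - 2 = 8*l+6 by omega,
    show (l+1) - 1 = l by omega]
  rw [show (16:ℝ) * ((D:ℝ)-1) = 2^4 * ((D:ℝ)-1) by norm_num, mul_pow,
    mul_pow (D:ℝ) x,
    show (1:ℝ)/(4*(D:ℝ)) = 1/(2^2*(D:ℝ)) by norm_num]
  have hs : Real.sqrt (D:ℝ) ≠ 0 := by positivity
  have hx' : (x:ℝ) ≠ 0 := ne_of_gt hx
  field_simp
  rw [div_pow, div_pow, one_pow, mul_pow, mul_pow, ← pow_mul, ← pow_mul, ← pow_mul]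
  field_simp
  ring

/-- Exact asymptotics of the cherry-tree amplitudes (Main Bound, exact part): for
`3 ≤ D ≤ 5`, `L ≥ 1`, `x > 0`, one has
`N^{D/2-1}·A_L(N) = 8√D·catalan(L-1)·x^{1/2-L}/(16(D-1))^L + O(N^{-1/2})`. -/
theorem cherry_tree_asymptotics (D : ℕ) (hD1 : 3 ≤ D) (hD2 : D ≤ 5)
    (L : ℕ) (hL : 1 ≤ L) (x : ℝ) (hx : 0 < x) :
    ∃ C > (0 : ℝ), ∃ N₀ : ℝ, ∀ N : ℝ, N₀ ≤ N →
      0 < 1 / (4 * (D : ℝ)) - x * N ^ (-((D : ℝ) - 2)) ∧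
      |N ^ ((D : ℝ) / 2 - 1) * cherryAmp D L x N -
          8 * Real.sqrt (D : ℝ) * (catalan (L - 1) : ℝ) * x ^ ((1 : ℝ) / 2 - (L : ℝ)) /
            (16 * ((D : ℝ) - 1)) ^ L|
        ≤ C * N ^ (-(1 : ℝ) / 2) := by
  have hDR : (3:ℝ) ≤ (D:ℝ) := by exact_mod_cast hD1
  have hD0 : (0:ℝ) < (D:ℝ) := by linarith
  obtain ⟨d, hd⟩ : ∃ d, HasDerivAt (hf D L) d 0 :=
    ⟨deriv (hf D L) 0, (hf_diff hD1 L).hasDerivAt⟩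
  have hslope := hasDerivAt_iff_tendsto_slope.1 hd
  have hs0 : Tendsto (fun N : ℝ => Real.sqrt x * N ^ (-((D:ℝ)-2)/2)) atTop (nhds 0) := by
    have h := (tendsto_rpow_neg_atTop (y := ((D:ℝ)-2)/2) (by linarith)).const_mul (Real.sqrt x)
    rwa [show -(((D:ℝ)-2)/2) = -((D:ℝ)-2)/2 from (neg_div _ _).symm, mul_zero] at h
  have hsW : Tendsto (fun N : ℝ => Real.sqrt x * N ^ (-((D:ℝ)-2)/2)) atTop
      (nhdsWithin 0 {(0:ℝ)}ᶜ) := by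
    rw [tendsto_nhdsWithin_iff]
    refine ⟨hs0, ?_⟩
    filter_upwards [eventually_gt_atTop 0] with N hN
    have hp : 0 < Real.sqrt x * N ^ (-((D:ℝ)-2)/2) :=
      mul_pos (Real.sqrt_pos.2 hx) (Real.rpow_pos_of_pos hN _)
    simpa using ne_of_gt hp
  have hslope2 : Tendsto (fun N : ℝ =>
      (hf D L (Real.sqrt x * N ^ (-((D:ℝ)-2)/2)) - hf D L 0) /
        (Real.sqrt x * N ^ (-((D:ℝ)-2)/2))) atTop (nhds d) := by
    have h := hslope.comp hsW
    simp only [Function.comp_def, slope_def_field, sub_zero] at h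
    exact h
  -- the second factor `s N · N^{1/2}` converges
  obtain ⟨l2, hl2⟩ : ∃ l2, Tendsto (fun N : ℝ =>
      (Real.sqrt x * N ^ (-((D:ℝ)-2)/2)) * N ^ ((1:ℝ)/2)) atTop (nhds l2) := by
    have heq : ∀ᶠ N in atTop, Real.sqrt x * N ^ (-(((D:ℝ)-3)/2))
        = (Real.sqrt x * N ^ (-((D:ℝ)-2)/2)) * N ^ ((1:ℝ)/2) := by
      filter_upwards [eventually_gt_atTop 0] with N hN
      rw [mul_assoc, ← Real.rpow_add hN]
      congr 1
      ring
    by_cases hD3 : D = 3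
    · refine ⟨Real.sqrt x, Tendsto.congr' heq ?_⟩
      subst hD3
      have hz : -((((3:ℕ):ℝ))-3)/2 = 0 := by norm_num
      have : (fun N : ℝ => Real.sqrt x * N ^ (-(((((3:ℕ):ℝ))-3)/2))) = fun _ => Real.sqrt x := by
        funext N
        rw [show -(((((3:ℕ):ℝ))-3)/2) = 0 by norm_num, Real.rpow_zero, mul_one]
      rw [this]
      exact tendsto_const_nhds
    · have hgt : (0:ℝ) < ((D:ℝ)-3)/2 := by
        have h4 : 4 ≤ D := by omega
        have h4' : (4:ℝ) ≤ (D:ℝ) := by exact_mod_cast h4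
        linarith
      refine ⟨0, Tendsto.congr' heq ?_⟩
      have h := (tendsto_rpow_neg_atTop hgt).const_mul (Real.sqrt x)
      rwa [mul_zero] at h
  -- the full rescaled error converges
  have hFt : Tendsto (fun N : ℝ => N ^ ((1:ℝ)/2) *
      (N ^ ((D:ℝ)/2 - 1) * cherryAmp D L x N -
        8 * Real.sqrt (D:ℝ) * (catalan (L - 1) : ℝ) * x ^ ((1:ℝ)/2 - (L:ℝ)) /
          (16 * ((D:ℝ) - 1)) ^ L)) atTop
      (nhds ((catalan (L-1) : ℝ) * (4 * (D:ℝ) * x) ^ ((1:ℝ)/2 - (L:ℝ)) * d * l2)) := by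
    have hmul : Tendsto (fun N : ℝ =>
        (catalan (L-1) : ℝ) * (4 * (D:ℝ) * x) ^ ((1:ℝ)/2 - (L:ℝ)) *
          ((hf D L (Real.sqrt x * N ^ (-((D:ℝ)-2)/2)) - hf D L 0) /
            (Real.sqrt x * N ^ (-((D:ℝ)-2)/2))) *
          ((Real.sqrt x * N ^ (-((D:ℝ)-2)/2)) * N ^ ((1:ℝ)/2))) atTop
        (nhds ((catalan (L-1) : ℝ) * (4 * (D:ℝ) * x) ^ ((1:ℝ)/2 - (L:ℝ)) * d * l2)) :=
      (hslope2.const_mul _).mul hl2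
    refine Tendsto.congr' ?_ hmul
    filter_upwards [eventually_gt_atTop 0] with N hN
    have hsne : Real.sqrt x * N ^ (-((D:ℝ)-2)/2) ≠ 0 :=
      ne_of_gt (mul_pos (Real.sqrt_pos.2 hx) (Real.rpow_pos_of_pos hN _))
    rw [amp_eq hD1 hx hN, ← const_id hD1 hL hx]
    field_simp
  -- conclude
  refine ⟨|(catalan (L-1) : ℝ) * (4 * (D:ℝ) * x) ^ ((1:ℝ)/2 - (L:ℝ)) * d * l2| + 1,
    by positivity, ?_⟩
  have hev1 := hFt.abs.eventually_lt_const
    (lt_add_one |(catalan (L-1) : ℝ) * (4 * (D:ℝ) * x) ^ ((1:ℝ)/2 - (L:ℝ)) * d * l2|)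
  have h0t : Tendsto (fun N : ℝ => x * N ^ (-((D:ℝ)-2))) atTop (nhds 0) := by
    have h := (tendsto_rpow_neg_atTop (y := (D:ℝ)-2) (by linarith)).const_mul x
    rwa [mul_zero] at h
  have hev2 := h0t.eventually_lt_const (show (0:ℝ) < 1/(4*(D:ℝ)) by positivity)
  obtain ⟨N₀, hN₀⟩ := eventually_atTop.1 ((hev1.and hev2).and (eventually_ge_atTop 1))
  refine ⟨N₀, fun N hN => ?_⟩
  obtain ⟨⟨h1, h2⟩, h3⟩ := hN₀ N hN
  have hNpos : (0:ℝ) < N := lt_of_lt_of_le one_pos h3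
  refine ⟨by linarith, ?_⟩
  have hr : (0:ℝ) < N ^ ((1:ℝ)/2) := Real.rpow_pos_of_pos hNpos _
  rw [abs_mul, abs_of_pos hr] at h1
  have hinv : N ^ (-(1:ℝ)/2) = (N ^ ((1:ℝ)/2))⁻¹ := by
    rw [show (-(1:ℝ))/2 = -((1:ℝ)/2) by norm_num, Real.rpow_neg hNpos.le]
  rw [hinv, ← div_eq_mul_inv, le_div_iff₀ hr, mul_comm]
  exact h1.le
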